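/- For n ≥ 1, Q̃_n conj(Q̃_n) + Q̃_{n−1} conj(Q̃_{n−1}) = 3(L_{2n+2} + 2ε L_{2n+3}) as a scalar dual number. -/

import Mathlib

open Quaternion TrivSqZeroExt DualNumber

noncomputable section

/-- The n-th Fibonacci quaternion Q_n = F_n + i F_{n+1} + j F_{n+2} + k F_{n+3}. -/
def fibQ (n : ℕ) : ℍ[ℝ] :=
  ⟨Nat.fib n, Nat.fib (n+1), Nat.fib (n+2), Nat.fib (n+3)⟩

/-- Lucas numbers: L_0 = 2, L_1 = 1. -/
def lucas : ℕ → ℕ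
  | 0 => 2
  | 1 => 1
  | n + 2 => lucas n + lucas (n+1)

/-- The n-th Lucas quaternion K_n = L_n + i L_{n+1} + j L_{n+2} + k L_{n+3}. -/
def lucasQ (n : ℕ) : ℍ[ℝ] :=
  ⟨lucas n, lucas (n+1), lucas (n+2), lucas (n+3)⟩

/-- The n-th dual Fibonacci quaternion Q̃_n = Q_n + ε Q_{n+1}. -/
def dQ (n : ℕ) : DualNumber ℍ[ℝ] := inl (fibQ n) + inl (fibQ (n+1)) * ε

/-- The n-th dual Lucas quaternion K̃_n = K_n + ε K_{n+1}. -/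
def dK (n : ℕ) : DualNumber ℍ[ℝ] := inl (lucasQ n) + inl (lucasQ (n+1)) * ε

/-- Conjugate of the dual Fibonacci quaternion (componentwise quaternion conjugation). -/
def dQconj (n : ℕ) : DualNumber ℍ[ℝ] := inl (star (fibQ n)) + inl (star (fibQ (n+1))) * ε

/-- The dual Fibonacci number F̃_n = F_n + ε F_{n+1} as a scalar dual quaternion. -/
def dF (n : ℕ) : DualNumber ℍ[ℝ] :=
  inl ((Nat.fib n : ℝ) : ℍ[ℝ]) + inl ((Nat.fib (n+1) : ℝ) : ℍ[ℝ]) * ε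

/-- The dual Lucas number L̃_n = L_n + ε L_{n+1} as a scalar dual quaternion. -/
def dL (n : ℕ) : DualNumber ℍ[ℝ] :=
  inl ((lucas n : ℝ) : ℍ[ℝ]) + inl ((lucas (n+1) : ℝ) : ℍ[ℝ]) * ε


lemma lucas_eq_fib (n : ℕ) : lucas (n+1) = Nat.fib n + Nat.fib (n+2) := by
  induction n using Nat.twoStepInduction with
  | zero => simp [lucas]
  | one => simp [lucas, Nat.fib_add_two]
  | more n ih1 ih2 =>
    show lucas (n+1) + lucas (n+2) = _
    rw [ih1, ih2, Nat.fib_add_two (n := n+2), Nat.fib_add_two (n := n)]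
    ring

lemma fibs_aux (m : ℕ) : Nat.fib (m+2) = Nat.fib m + Nat.fib (m+1)
    ∧ Nat.fib (m+3) = Nat.fib m + 2 * Nat.fib (m+1)
    ∧ Nat.fib (m+4) = 2 * Nat.fib m + 3 * Nat.fib (m+1)
    ∧ Nat.fib (m+5) = 3 * Nat.fib m + 5 * Nat.fib (m+1) := by
  have h2 : Nat.fib (m+2) = Nat.fib m + Nat.fib (m+1) := Nat.fib_add_two
  have h3 : Nat.fib (m+3) = Nat.fib (m+1) + Nat.fib (m+2) := Nat.fib_add_two
  have h4 : Nat.fib (m+4) = Nat.fib (m+2) + Nat.fib (m+3) := Nat.fib_add_two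
  have h5 : Nat.fib (m+5) = Nat.fib (m+3) + Nat.fib (m+4) := Nat.fib_add_two
  omega

lemma keyA_nat (m : ℕ) :
    Nat.fib (m+1)^2 + Nat.fib (m+2)^2 + Nat.fib (m+3)^2 + Nat.fib (m+4)^2
      + (Nat.fib m^2 + Nat.fib (m+1)^2 + Nat.fib (m+2)^2 + Nat.fib (m+3)^2)
      = 3 * lucas (2*m+4) := by
  obtain ⟨h2, h3, h4, h5⟩ := fibs_aux m
  have hl : lucas (2*m+4) = Nat.fib (2*m+3) + Nat.fib (2*m+5) := lucas_eq_fib (2*m+3)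
  have ha : Nat.fib (2*m+3) = Nat.fib (m+1) * Nat.fib (m+1) + Nat.fib (m+2) * Nat.fib (m+2) := by
    have := Nat.fib_add (m+1) (m+1)
    rw [show m+1+(m+1)+1 = 2*m+3 by ring] at this
    rw [this]
  have hb : Nat.fib (2*m+5) = Nat.fib (m+2) * Nat.fib (m+2) + Nat.fib (m+3) * Nat.fib (m+3) := by
    have := Nat.fib_add (m+2) (m+2)
    rw [show m+2+(m+2)+1 = 2*m+5 by ring] at this
    rw [this]
  rw [hl, ha, hb, h2, h3, h4]; ring

lemma keyB_nat (m : ℕ) :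
    2 * (Nat.fib (m+1) * Nat.fib (m+2) + Nat.fib (m+2) * Nat.fib (m+3)
        + Nat.fib (m+3) * Nat.fib (m+4) + Nat.fib (m+4) * Nat.fib (m+5))
      + 2 * (Nat.fib m * Nat.fib (m+1) + Nat.fib (m+1) * Nat.fib (m+2)
        + Nat.fib (m+2) * Nat.fib (m+3) + Nat.fib (m+3) * Nat.fib (m+4))
      = 3 * (2 * lucas (2*m+5)) := by
  obtain ⟨h2, h3, h4, h5⟩ := fibs_aux m
  have hl : lucas (2*m+5) = Nat.fib (2*m+4) + Nat.fib (2*m+6) := lucas_eq_fib (2*m+4)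
  have ha : Nat.fib (2*m+4) = Nat.fib (m+1) * Nat.fib (m+2) + Nat.fib (m+2) * Nat.fib (m+3) := by
    have := Nat.fib_add (m+1) (m+2)
    rw [show m+1+(m+2)+1 = 2*m+4 by ring] at this
    rw [this]
  have hb : Nat.fib (2*m+6) = Nat.fib (m+2) * Nat.fib (m+3) + Nat.fib (m+3) * Nat.fib (m+4) := by
    have := Nat.fib_add (m+2) (m+3)
    rw [show m+2+(m+3)+1 = 2*m+6 by ring] at this
    rw [this]
  rw [hl, ha, hb, h2, h3, h4, h5]; ring

lemma mul_expand_aux (a b c d : ℍ[ℝ]) :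
    (inl a + inl b * ε) * (inl c + inl d * ε) =
      inl (a * c) + inl (a * d + b * c) * ε := by
  ext <;> simp [mul_comm]

lemma add_expand_aux (a b c d : ℍ[ℝ]) :
    (inl a + inl b * ε) + (inl c + inl d * ε) = inl (a + c) + inl (b + d) * ε := by
  ext <;> simp

lemma smul_expand_aux (x y : ℍ[ℝ]) : (3 : ℝ) • (inl x + inl y * ε : DualNumber ℍ[ℝ]) =
    inl ((3:ℝ) • x) + inl ((3:ℝ) • y) * ε := by
  refine TrivSqZeroExt.ext ?_ ?_ <;> simp

lemma hA_aux (m : ℕ) :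
    fibQ (m+1) * star (fibQ (m+1)) + fibQ m * star (fibQ m)
      = ((3 * lucas (2*m+4) : ℝ) : ℍ[ℝ]) := by
  have keyR : (Nat.fib (m+1):ℝ)^2 + (Nat.fib (m+2):ℝ)^2 + (Nat.fib (m+3):ℝ)^2
      + (Nat.fib (m+4):ℝ)^2 + ((Nat.fib m:ℝ)^2 + (Nat.fib (m+1):ℝ)^2 + (Nat.fib (m+2):ℝ)^2
      + (Nat.fib (m+3):ℝ)^2) = 3 * (lucas (2*m+4):ℝ) := by
    exact_mod_cast congrArg (Nat.cast (R := ℝ)) (keyA_nat m)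
  ext <;> simp only [Quaternion.re_add, Quaternion.re_mul, Quaternion.re_star,
      Quaternion.imI_star, Quaternion.imJ_star, Quaternion.imK_star, Quaternion.re_coe,
      Quaternion.imI_add, Quaternion.imI_mul, Quaternion.imI_coe,
      Quaternion.imJ_add, Quaternion.imJ_mul, Quaternion.imJ_coe,
      Quaternion.imK_add, Quaternion.imK_mul, Quaternion.imK_coe,
      show m+1+1 = m+2 by omega, show m+1+2 = m+3 by omega, show m+1+3 = m+4 by omega] <;>
    simp only [fibQ, show m+1+1 = m+2 by omega, show m+1+2 = m+3 by omega, show m+1+3 = m+4 by omega]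
  · linear_combination keyR
  all_goals ring

lemma hB_aux (m : ℕ) :
    (fibQ (m+1) * star (fibQ (m+2)) + fibQ (m+2) * star (fibQ (m+1)))
      + (fibQ m * star (fibQ (m+1)) + fibQ (m+1) * star (fibQ m))
      = ((3 * (2 * lucas (2*m+5)) : ℝ) : ℍ[ℝ]) := by
  have keyR : 2 * ((Nat.fib (m+1):ℝ) * Nat.fib (m+2) + (Nat.fib (m+2):ℝ) * Nat.fib (m+3)
        + (Nat.fib (m+3):ℝ) * Nat.fib (m+4) + (Nat.fib (m+4):ℝ) * Nat.fib (m+5))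
      + 2 * ((Nat.fib m:ℝ) * Nat.fib (m+1) + (Nat.fib (m+1):ℝ) * Nat.fib (m+2)
        + (Nat.fib (m+2):ℝ) * Nat.fib (m+3) + (Nat.fib (m+3):ℝ) * Nat.fib (m+4))
      = 3 * (2 * (lucas (2*m+5):ℝ)) := by
    exact_mod_cast congrArg (Nat.cast (R := ℝ)) (keyB_nat m)
  ext <;> simp only [Quaternion.re_add, Quaternion.re_mul, Quaternion.re_star,
      Quaternion.imI_star, Quaternion.imJ_star, Quaternion.imK_star, Quaternion.re_coe,
      Quaternion.imI_add, Quaternion.imI_mul, Quaternion.imI_coe,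
      Quaternion.imJ_add, Quaternion.imJ_mul, Quaternion.imJ_coe,
      Quaternion.imK_add, Quaternion.imK_mul, Quaternion.imK_coe,
      show m+1+1 = m+2 by omega, show m+1+2 = m+3 by omega, show m+1+3 = m+4 by omega,
      show m+2+1 = m+3 by omega, show m+2+2 = m+4 by omega, show m+2+3 = m+5 by omega] <;>
    simp only [fibQ, show m+1+1 = m+2 by omega, show m+1+2 = m+3 by omega, show m+1+3 = m+4 by omega,
      show m+2+1 = m+3 by omega, show m+2+2 = m+4 by omega, show m+2+3 = m+5 by omega]
  · linear_combination keyR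
  all_goals ring

def qi : ℍ[ℝ] := ⟨0,1,0,0⟩
def qj : ℍ[ℝ] := ⟨0,0,1,0⟩
def qk : ℍ[ℝ] := ⟨0,0,0,1⟩

theorem dual_fib_norm_sum (n : ℕ) (hn : 1 ≤ n) :
    dQ n * dQconj n + dQ (n-1) * dQconj (n-1) =
      (3 : ℝ) • (inl ((lucas (2*n+2) : ℝ) : ℍ[ℝ]) +
        inl ((2 * (lucas (2*n+3) : ℝ) : ℍ[ℝ])) * ε) := by
  obtain ⟨m, rfl⟩ : ∃ m, n = m + 1 := ⟨n - 1, by omega⟩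
  have hsA : ((3 * lucas (2*m+4) : ℝ) : ℍ[ℝ]) = (3:ℝ) • ((lucas (2*m+4) : ℝ) : ℍ[ℝ]) := by
    rw [← Quaternion.coe_smul]; norm_num
  have hsB : ((3 * (2 * lucas (2*m+5)) : ℝ) : ℍ[ℝ])
      = (3:ℝ) • ((2 * ((lucas (2*m+5) : ℝ)) : ℍ[ℝ])) := by
    rw [show ((2 * ((lucas (2*m+5) : ℝ)) : ℍ[ℝ])) = (((2 * (lucas (2*m+5)) : ℝ)) : ℍ[ℝ]) by
      push_cast; norm_cast]
    rw [← Quaternion.coe_mul_eq_smul]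
    push_cast; ring
  simp only [Nat.add_sub_cancel, dQ, dQconj, mul_expand_aux,
    show 2*(m+1)+2 = 2*m+4 by ring, show 2*(m+1)+3 = 2*m+5 by ring,
    show m+1+1 = m+2 by omega, add_expand_aux, hA_aux m, hB_aux m,
    smul_expand_aux, hsA, hsB]
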